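/- If W ⟂ Y | (Z, X) and additionally Z ⟂ W | (Y', X) for some function Y' of Y, then for the specific choice φ(x, z) = P(Y = 1 | X = x, Z = z) (Y binary), we have P(Y = 1 | W = w, X = x, φ(X,Z) = f) = f for every f in the range of φ with positive conditional probability; in particular this conditional probability does not depend on w, hence W ⟂ Y | (φ(X,Z), X). -/
import Mathlib

open Finset

attribute [local instance] Classical.propDecidable

/-- Probability of an event on a finite outcome space. -/
noncomputable def Pr {Ω : Type*} [Fintype Ω] (p : Ω → ℝ) (E : Ω → Prop) : ℝ :=
  ∑ ω, if E ω then p ω else 0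

/-- Conditional probability `P(E | F)`. -/
noncomputable def condPr {Ω : Type*} [Fintype Ω] (p : Ω → ℝ) (E F : Ω → Prop) : ℝ :=
  Pr p (fun ω => E ω ∧ F ω) / Pr p F

/-- Conditional independence of `A` and `B` given `S`, via factorization of the joint law. -/
def CondIndepOn {Ω α β γ : Type*} [Fintype Ω] (p : Ω → ℝ)
    (A : Ω → α) (B : Ω → β) (S : Ω → γ) : Prop :=
  ∀ a b s,
    Pr p (fun ω => A ω = a ∧ B ω = b ∧ S ω = s) * Pr p (fun ω => S ω = s) =
    Pr p (fun ω => A ω = a ∧ S ω = s) * Pr p (fun ω => B ω = b ∧ S ω = s)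

lemma Pr_congr {Ω : Type*} [Fintype Ω] (p : Ω → ℝ) {E F : Ω → Prop}
    (h : ∀ ω, E ω ↔ F ω) : Pr p E = Pr p F := by
  unfold Pr; exact Finset.sum_congr rfl fun ω _ => by rw [if_congr (h ω) rfl rfl]

lemma Pr_fiber {Ω 𝓩 : Type*} [Fintype Ω] [Fintype 𝓩] (p : Ω → ℝ) (Z : Ω → 𝓩)
    (g : 𝓩 → ℝ) (f : ℝ) (E : Ω → Prop) :
    Pr p (fun ω => E ω ∧ g (Z ω) = f)
      = ∑ z ∈ Finset.univ.filter (fun z => g z = f), Pr p (fun ω => E ω ∧ Z ω = z) := by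
  unfold Pr
  rw [Finset.sum_comm]
  refine Finset.sum_congr rfl fun ω _ => ?_
  by_cases hE : E ω
  · simp only [hE, true_and]
    rw [Finset.sum_ite_eq (Finset.univ.filter (fun z => g z = f)) (Z ω) (fun _ => p ω)]
    simp [Finset.mem_filter]
  · simp [hE]

lemma Pr_sub {Ω : Type*} [Fintype Ω] (p : Ω → ℝ) (Y : Ω → Fin 2) (E : Ω → Prop) :
    Pr p (fun ω => Y ω = 0 ∧ E ω) = Pr p E - Pr p (fun ω => Y ω = 1 ∧ E ω) := by
  unfold Pr
  rw [← Finset.sum_sub_distrib]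
  refine Finset.sum_congr rfl fun ω _ => ?_
  have h : Y ω = 0 ∨ Y ω = 1 := by omega
  by_cases hE : E ω <;> rcases h with h | h <;> simp [h, hE]

/-- If `W ⟂ Y | (Z, X)` (and moreover `Z ⟂ W | (Y', X)` for some
function `Y' = k ∘ Y` of `Y`), then for `φ x z := P(Y=1 | X=x, Z=z)` (binary `Y`)
one has `P(Y=1 | W=w, X=x, φ(X,Z)=f) = f` whenever the conditioning event has positive
probability; in particular this does not depend on `w`, hence `W ⟂ Y | (φ(X,Z), X)`. -/
theorem stmt7 {Ω 𝓦 𝓧 𝓨' 𝓩 : Type*} [Fintype Ω] [Fintype 𝓧] [Fintype 𝓩]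
    (p : Ω → ℝ) (hp : ∀ ω, 0 ≤ p ω) (hsum : ∑ ω, p ω = 1)
    (W : Ω → 𝓦) (X : Ω → 𝓧) (Z : Ω → 𝓩) (Y : Ω → Fin 2) (k : Fin 2 → 𝓨')
    (hWY : CondIndepOn p W Y (fun ω => (Z ω, X ω)))
    (hZW : CondIndepOn p Z W (fun ω => (k (Y ω), X ω)))
    (φ : 𝓧 → 𝓩 → ℝ)
    (hφ : ∀ x z, φ x z = condPr p (fun ω => Y ω = 1) (fun ω => X ω = x ∧ Z ω = z))
    (hpos : ∀ x z, 0 < Pr p (fun ω => X ω = x ∧ Z ω = z)) :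
    (∀ (w : 𝓦) (x : 𝓧) (f : ℝ),
      0 < Pr p (fun ω => W ω = w ∧ X ω = x ∧ φ x (Z ω) = f) →
      condPr p (fun ω => Y ω = 1) (fun ω => W ω = w ∧ X ω = x ∧ φ x (Z ω) = f) = f) ∧
    CondIndepOn p W Y (fun ω => (φ (X ω) (Z ω), X ω)) := by
  have key1 : ∀ x z, Pr p (fun ω => Y ω = 1 ∧ X ω = x ∧ Z ω = z)
      = φ x z * Pr p (fun ω => X ω = x ∧ Z ω = z) := by
    intro x z
    rw [hφ x z]
    unfold condPr
    rw [div_mul_cancel₀ _ (hpos x z).ne']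
  have key2 : ∀ (w : 𝓦) (x : 𝓧) (z : 𝓩),
      Pr p (fun ω => Y ω = 1 ∧ W ω = w ∧ X ω = x ∧ Z ω = z)
        = φ x z * Pr p (fun ω => W ω = w ∧ X ω = x ∧ Z ω = z) := by
    intro w x z
    have h := hWY w 1 (z, x)
    have e1 : Pr p (fun ω => W ω = w ∧ Y ω = 1 ∧ (Z ω, X ω) = (z, x))
        = Pr p (fun ω => Y ω = 1 ∧ W ω = w ∧ X ω = x ∧ Z ω = z) :=
      Pr_congr p fun ω => by rw [Prod.mk.injEq]; tauto
    have e2 : Pr p (fun ω => (Z ω, X ω) = (z, x))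
        = Pr p (fun ω => X ω = x ∧ Z ω = z) :=
      Pr_congr p fun ω => by rw [Prod.mk.injEq]; tauto
    have e3 : Pr p (fun ω => W ω = w ∧ (Z ω, X ω) = (z, x))
        = Pr p (fun ω => W ω = w ∧ X ω = x ∧ Z ω = z) :=
      Pr_congr p fun ω => by rw [Prod.mk.injEq]; tauto
    have e4 : Pr p (fun ω => Y ω = 1 ∧ (Z ω, X ω) = (z, x))
        = Pr p (fun ω => Y ω = 1 ∧ X ω = x ∧ Z ω = z) :=
      Pr_congr p fun ω => by rw [Prod.mk.injEq]; tauto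
    rw [e1, e2, e3, e4, key1 x z] at h
    have h' : Pr p (fun ω => Y ω = 1 ∧ W ω = w ∧ X ω = x ∧ Z ω = z)
        * Pr p (fun ω => X ω = x ∧ Z ω = z)
        = (φ x z * Pr p (fun ω => W ω = w ∧ X ω = x ∧ Z ω = z))
        * Pr p (fun ω => X ω = x ∧ Z ω = z) := by rw [h]; ring
    exact mul_right_cancel₀ (hpos x z).ne' h'
  have mainW : ∀ (w : 𝓦) (x : 𝓧) (f : ℝ),
      Pr p (fun ω => Y ω = 1 ∧ W ω = w ∧ X ω = x ∧ φ x (Z ω) = f)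
        = f * Pr p (fun ω => W ω = w ∧ X ω = x ∧ φ x (Z ω) = f) := by
    intro w x f
    calc Pr p (fun ω => Y ω = 1 ∧ W ω = w ∧ X ω = x ∧ φ x (Z ω) = f)
        = Pr p (fun ω => (Y ω = 1 ∧ W ω = w ∧ X ω = x) ∧ φ x (Z ω) = f) :=
          Pr_congr p fun ω => by tauto
      _ = ∑ z ∈ Finset.univ.filter (fun z => φ x z = f),
            Pr p (fun ω => (Y ω = 1 ∧ W ω = w ∧ X ω = x) ∧ Z ω = z) :=
          Pr_fiber p Z (φ x) f _
      _ = ∑ z ∈ Finset.univ.filter (fun z => φ x z = f),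
            f * Pr p (fun ω => (W ω = w ∧ X ω = x) ∧ Z ω = z) := by
          refine Finset.sum_congr rfl fun z hz => ?_
          rw [Finset.mem_filter] at hz
          rw [Pr_congr p (F := fun ω => Y ω = 1 ∧ W ω = w ∧ X ω = x ∧ Z ω = z)
              (fun ω => by tauto), key2 w x z, hz.2,
              Pr_congr p (E := fun ω => W ω = w ∧ X ω = x ∧ Z ω = z)
              (F := fun ω => (W ω = w ∧ X ω = x) ∧ Z ω = z) (fun ω => by tauto)]
      _ = f * Pr p (fun ω => W ω = w ∧ X ω = x ∧ φ x (Z ω) = f) := by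
          rw [← Finset.mul_sum, ← Pr_fiber p Z (φ x) f (fun ω => W ω = w ∧ X ω = x)]
          congr 1
          exact Pr_congr p fun ω => by tauto
  have mainN : ∀ (x : 𝓧) (f : ℝ),
      Pr p (fun ω => Y ω = 1 ∧ X ω = x ∧ φ x (Z ω) = f)
        = f * Pr p (fun ω => X ω = x ∧ φ x (Z ω) = f) := by
    intro x f
    calc Pr p (fun ω => Y ω = 1 ∧ X ω = x ∧ φ x (Z ω) = f)
        = Pr p (fun ω => (Y ω = 1 ∧ X ω = x) ∧ φ x (Z ω) = f) :=
          Pr_congr p fun ω => by tauto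
      _ = ∑ z ∈ Finset.univ.filter (fun z => φ x z = f),
            Pr p (fun ω => (Y ω = 1 ∧ X ω = x) ∧ Z ω = z) :=
          Pr_fiber p Z (φ x) f _
      _ = ∑ z ∈ Finset.univ.filter (fun z => φ x z = f),
            f * Pr p (fun ω => (X ω = x) ∧ Z ω = z) := by
          refine Finset.sum_congr rfl fun z hz => ?_
          rw [Finset.mem_filter] at hz
          rw [Pr_congr p (F := fun ω => Y ω = 1 ∧ X ω = x ∧ Z ω = z)
              (fun ω => by tauto), key1 x z, hz.2]
      _ = f * Pr p (fun ω => X ω = x ∧ φ x (Z ω) = f) := by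
          rw [← Finset.mul_sum, ← Pr_fiber p Z (φ x) f (fun ω => X ω = x)]
  refine ⟨fun w x f hD => ?_, ?_⟩
  · unfold condPr
    show Pr p (fun ω => Y ω = 1 ∧ W ω = w ∧ X ω = x ∧ φ x (Z ω) = f)
        / Pr p (fun ω => W ω = w ∧ X ω = x ∧ φ x (Z ω) = f) = f
    rw [mainW w x f, mul_div_assoc, div_self hD.ne', mul_one]
  · rintro w y ⟨f, x⟩
    have hS : ∀ (E : Ω → Prop), Pr p (fun ω => E ω ∧ (φ (X ω) (Z ω), X ω) = (f, x))
        = Pr p (fun ω => E ω ∧ X ω = x ∧ φ x (Z ω) = f) := by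
      intro E
      refine Pr_congr p fun ω => ?_
      rw [Prod.mk.injEq]
      constructor
      · rintro ⟨hE, h1, h2⟩; rw [h2] at h1; exact ⟨hE, h2, h1⟩
      · rintro ⟨hE, h1, h2⟩; rw [h1]; exact ⟨hE, h2, rfl⟩
    have hS0 : Pr p (fun ω => (φ (X ω) (Z ω), X ω) = (f, x))
        = Pr p (fun ω => X ω = x ∧ φ x (Z ω) = f) := by
      have := hS (fun _ => True)
      rw [Pr_congr p (E := fun ω => (φ (X ω) (Z ω), X ω) = (f, x))
          (F := fun ω => True ∧ (φ (X ω) (Z ω), X ω) = (f, x)) (fun ω => by tauto), this]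
      exact Pr_congr p fun ω => by tauto
    have hA : Pr p (fun ω => W ω = w ∧ Y ω = y ∧ (φ (X ω) (Z ω), X ω) = (f, x))
        = Pr p (fun ω => Y ω = y ∧ W ω = w ∧ X ω = x ∧ φ x (Z ω) = f) := by
      rw [Pr_congr p (E := fun ω => W ω = w ∧ Y ω = y ∧ (φ (X ω) (Z ω), X ω) = (f, x))
          (F := fun ω => (Y ω = y ∧ W ω = w) ∧ (φ (X ω) (Z ω), X ω) = (f, x))
          (fun ω => by tauto), hS]
      exact Pr_congr p fun ω => by tauto
    have hB : Pr p (fun ω => W ω = w ∧ (φ (X ω) (Z ω), X ω) = (f, x))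
        = Pr p (fun ω => W ω = w ∧ X ω = x ∧ φ x (Z ω) = f) := hS _
    have hC : Pr p (fun ω => Y ω = y ∧ (φ (X ω) (Z ω), X ω) = (f, x))
        = Pr p (fun ω => Y ω = y ∧ X ω = x ∧ φ x (Z ω) = f) := hS _
    rw [hA, hB, hC, hS0]
    have hy : y = 0 ∨ y = 1 := by omega
    rcases hy with hy | hy
    · subst hy
      have s1 : Pr p (fun ω => Y ω = 0 ∧ W ω = w ∧ X ω = x ∧ φ x (Z ω) = f)
          = Pr p (fun ω => W ω = w ∧ X ω = x ∧ φ x (Z ω) = f)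
            - f * Pr p (fun ω => W ω = w ∧ X ω = x ∧ φ x (Z ω) = f) := by
        rw [Pr_sub p Y (fun ω => W ω = w ∧ X ω = x ∧ φ x (Z ω) = f), mainW w x f]
      have s2 : Pr p (fun ω => Y ω = 0 ∧ X ω = x ∧ φ x (Z ω) = f)
          = Pr p (fun ω => X ω = x ∧ φ x (Z ω) = f)
            - f * Pr p (fun ω => X ω = x ∧ φ x (Z ω) = f) := by
        rw [Pr_sub p Y (fun ω => X ω = x ∧ φ x (Z ω) = f), mainN x f]
      rw [s1, s2]; ring
    · subst hy
      rw [mainW w x f, mainN x f]; ring
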